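/- Let α < β be real numbers, let g : [α,β] → ℝ be continuous with g(β) > g(α), and let γ ∈ [α,β]. If F(α) ≥ F(γ), then ∫_α^γ g(x) dx ≤ (g(α) + g(β))·(γ − α)/2, i.e. ∫_α^γ ( g(x) − g(α) ) dx ≤ (g(β) − g(α))·(γ − α)/2. -/
import Mathlib


/-- If `g ∈ C[α,β]` with `g(β) > g(α)` and `γ ∈ [α,β]` satisfies `F(α) ≥ F(γ)`, where
`F(γ) = ∫_α^γ (g(α)-g)² + ∫_γ^β (g(β)-g)²`, then
`∫_α^γ (g(x) - g(α)) dx ≤ (g(β)-g(α))·(γ-α)/2`. -/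
theorem fidelity_average_bound (α β : ℝ) (hαβ : α < β) (g : ℝ → ℝ)
    (hg : ContinuousOn g (Set.Icc α β)) (hgab : g α < g β)
    (γ : ℝ) (hγ : γ ∈ Set.Icc α β)
    (hF : (∫ x in α..γ, (g α - g x) ^ 2) + (∫ x in γ..β, (g β - g x) ^ 2)
        ≤ ∫ x in α..β, (g β - g x) ^ 2) :
    (∫ x in α..γ, (g x - g α)) ≤ (g β - g α) * (γ - α) / 2 := by
  obtain ⟨hγ1, hγ2⟩ := hγ
  have hsub1 : Set.uIcc α γ ⊆ Set.Icc α β := by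
    rw [Set.uIcc_of_le hγ1]; exact Set.Icc_subset_Icc le_rfl hγ2
  have hsub2 : Set.uIcc γ β ⊆ Set.Icc α β := by
    rw [Set.uIcc_of_le hγ2]; exact Set.Icc_subset_Icc hγ1 le_rfl
  have hcsq : ∀ c : ℝ, ContinuousOn (fun x => (c - g x) ^ 2) (Set.Icc α β) :=
    fun c => (continuousOn_const.sub hg).pow 2
  have hI1 : IntervalIntegrable (fun x => (g β - g x) ^ 2) MeasureTheory.volume α γ :=
    ((hcsq (g β)).mono hsub1).intervalIntegrable
  have hI2 : IntervalIntegrable (fun x => (g β - g x) ^ 2) MeasureTheory.volume γ β :=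
    ((hcsq (g β)).mono hsub2).intervalIntegrable
  have hI3 : IntervalIntegrable (fun x => (g α - g x) ^ 2) MeasureTheory.volume α γ :=
    ((hcsq (g α)).mono hsub1).intervalIntegrable
  have hgint : IntervalIntegrable g MeasureTheory.volume α γ :=
    (hg.mono hsub1).intervalIntegrable
  have hsplit : (∫ x in α..β, (g β - g x) ^ 2)
      = (∫ x in α..γ, (g β - g x) ^ 2) + (∫ x in γ..β, (g β - g x) ^ 2) :=
    (intervalIntegral.integral_add_adjacent_intervals hI1 hI2).symm
  have hkey : (∫ x in α..γ, (g α - g x) ^ 2) ≤ ∫ x in α..γ, (g β - g x) ^ 2 := by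
    linarith
  have h0 : 0 ≤ ∫ x in α..γ, ((g β - g x) ^ 2 - (g α - g x) ^ 2) := by
    rw [intervalIntegral.integral_sub hI1 hI3]; linarith
  have heq : (∫ x in α..γ, ((g β - g x) ^ 2 - (g α - g x) ^ 2))
      = (g β - g α) * ((g β + g α) * (γ - α) - 2 * ∫ x in α..γ, g x) := by
    have h1 : ∀ x : ℝ, (g β - g x) ^ 2 - (g α - g x) ^ 2
        = (g β - g α) * ((g β + g α) - 2 * g x) := by intro x; ring
    simp_rw [h1]
    rw [intervalIntegral.integral_const_mul,
      intervalIntegral.integral_sub intervalIntegrable_const (hgint.const_mul 2),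
      intervalIntegral.integral_const_mul, intervalIntegral.integral_const]
    rw [smul_eq_mul]; ring
  have hX : 0 ≤ (g β + g α) * (γ - α) - 2 * ∫ x in α..γ, g x := by
    rw [heq] at h0
    nlinarith [h0, hgab]
  rw [intervalIntegral.integral_sub hgint intervalIntegrable_const,
    intervalIntegral.integral_const, smul_eq_mul]
  linarith
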